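/- arXiv:0810.3695 — 5 statements merged into one kernel-verified Lean document; each statement's English description precedes it below -/
import Mathlib

section
/- Let H be a subgroup of the Weyl–Heisenberg group G that intersects the center of G trivially. Then the normalizer of H in G (the set of g ∈ G with g⁻¹Hg = H) equals {(x,y,z) ∈ G : (x,y) ∈ S_H^⊥}, where S_H^⊥ is the orthogonal complement of S_H under the symplectic inner product. -/
/-- Dot product of two vectors over `ZMod p`. -/
def dot {p n : ℕ} (u v : Fin n → ZMod p) : ZMod p := ∑ i, u i * v i

/-- The underlying set of the Weyl–Heisenberg group: triples `(x, y, z)`. -/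
@[ext] structure WH (p n : ℕ) where
  x : Fin n → ZMod p
  y : Fin n → ZMod p
  z : ZMod p

namespace WH

variable {p n : ℕ}

/-- Multiplication `(x,y,z)·(x',y',z') = (x+x', y+y', z+z'+x'·y)`. -/
def wmul (g h : WH p n) : WH p n := ⟨g.x + h.x, g.y + h.y, g.z + h.z + dot h.x g.y⟩

def wone : WH p n := ⟨0, 0, 0⟩

def winv (g : WH p n) : WH p n := ⟨-g.x, -g.y, dot g.x g.y - g.z⟩

instance : Group (WH p n) where
  mul := wmul
  one := wone
  inv := winv
  mul_assoc g h k := by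
    show wmul (wmul g h) k = wmul g (wmul h k)
    simp only [wmul, dot, mk.injEq, Pi.add_apply, mul_add, add_mul,
      Finset.sum_add_distrib]
    refine ⟨by abel, by abel, by ring⟩
  one_mul g := by
    show wmul wone g = g
    obtain ⟨x, y, z⟩ := g
    simp [wmul, wone, dot]
  mul_one g := by
    show wmul g wone = g
    obtain ⟨x, y, z⟩ := g
    simp [wmul, wone, dot]
  inv_mul_cancel g := by
    show wmul (winv g) g = wone
    obtain ⟨x, y, z⟩ := g
    simp only [wmul, winv, wone, dot, mk.injEq, Pi.neg_apply, neg_mul]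
    refine ⟨by abel, by abel, ?_⟩
    simp [Finset.sum_neg_distrib]

theorem mul_def (g h : WH p n) :
    g * h = ⟨g.x + h.x, g.y + h.y, g.z + h.z + dot h.x g.y⟩ := rfl

theorem one_def : (1 : WH p n) = ⟨0, 0, 0⟩ := rfl

end WH

/-- `S_H`: the pairs `(x,y)` occurring in `H`. -/
def SH {p n : ℕ} (H : Subgroup (WH p n)) : Set ((Fin n → ZMod p) × (Fin n → ZMod p)) :=
  {v | ∃ z : ZMod p, (⟨v.1, v.2, z⟩ : WH p n) ∈ H}

/-- Symplectic inner product `⟨(x,y),(x',y')⟩ = x·y' - y·x'`. -/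
def symp {p n : ℕ} (v w : (Fin n → ZMod p) × (Fin n → ZMod p)) : ZMod p :=
  dot v.1 w.2 - dot v.2 w.1

/-- Orthogonal complement under the symplectic inner product. -/
def sperp {p n : ℕ} (S : Set ((Fin n → ZMod p) × (Fin n → ZMod p))) :
    Set ((Fin n → ZMod p) × (Fin n → ZMod p)) :=
  {v | ∀ s ∈ S, symp v s = 0}
namespace WH

variable {p n : ℕ}

theorem inv_def (g : WH p n) :
    g⁻¹ = ⟨-g.x, -g.y, dot g.x g.y - g.z⟩ := rfl

theorem dot_comm (u v : Fin n → ZMod p) : dot u v = dot v u := by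
  simp [dot, mul_comm]

theorem conj_eq (g h : WH p n) :
    g * h * g⁻¹ = ⟨h.x, h.y, h.z + dot h.x g.y - dot g.x h.y⟩ := by
  ext <;>
    simp [mul_def, inv_def, dot, mul_add, add_mul, neg_mul, mul_neg,
      Finset.sum_add_distrib] <;> abel

theorem central_of_xy_zero (t : ZMod p) :
    (⟨0, 0, t⟩ : WH p n) ∈ Subgroup.center (WH p n) := by
  rw [Subgroup.mem_center_iff]
  intro k
  ext <;> simp [mul_def, dot] <;> ring

end WH

/-- If `H` intersects the center trivially, then the normalizer of `H` in `G`
equals `{(x,y,z) ∈ G : (x,y) ∈ S_H^⊥}`, the orthogonal complement taken with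
respect to the symplectic inner product. -/
theorem normalizer_eq_sperp (p n : ℕ) [Fact p.Prime] (hn : 1 ≤ n)
    (H : Subgroup (WH p n)) (hZ : H ⊓ Subgroup.center (WH p n) = ⊥) :
    (Subgroup.normalizer (H : Set (WH p n)) : Set (WH p n)) = {g : WH p n | (g.x, g.y) ∈ sperp (SH H)} := by
  ext g
  simp only [SetLike.mem_coe, Subgroup.mem_normalizer_iff, Subgroup.mem_set_normalizer_iff, Set.mem_setOf_eq, sperp, SH]
  constructor
  · rintro hg ⟨x, y⟩ ⟨z, hz⟩
    have h1 : g * ⟨x, y, z⟩ * g⁻¹ ∈ H := (hg _).mp hz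
    rw [WH.conj_eq] at h1
    have h2 : (⟨x, y, z⟩ : WH p n)⁻¹ * ⟨x, y, z + dot x g.y - dot g.x y⟩ ∈ H :=
      H.mul_mem (H.inv_mem hz) h1
    have h3 : (⟨x, y, z⟩ : WH p n)⁻¹ * ⟨x, y, z + dot x g.y - dot g.x y⟩ =
        ⟨0, 0, dot x g.y - dot g.x y⟩ := by
      ext <;> simp [WH.mul_def, WH.inv_def, dot, neg_mul, Finset.sum_add_distrib] <;> abel
    rw [h3] at h2
    have h4 : (⟨0, 0, dot x g.y - dot g.x y⟩ : WH p n) = 1 := by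
      have := hZ ▸ (Subgroup.mem_inf.mpr ⟨h2, WH.central_of_xy_zero _⟩)
      simpa using this
    have h5 : dot x g.y - dot g.x y = 0 := congrArg WH.z h4
    simp only [symp]
    rw [WH.dot_comm g.y x]
    linear_combination -h5
  · intro hg h
    have key : ∀ z', (⟨h.x, h.y, z'⟩ : WH p n) ∈ H →
        dot h.x g.y - dot g.x h.y = 0 := by
      intro z' hz'
      have := hg (h.x, h.y) ⟨z', hz'⟩
      simp only [symp] at this
      rw [WH.dot_comm g.y h.x] at this
      linear_combination -this
    constructor
    · intro hh
      rw [WH.conj_eq]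
      have := key h.z hh
      have : (⟨h.x, h.y, h.z + dot h.x g.y - dot g.x h.y⟩ : WH p n) = h := by
        ext <;> simp <;> linear_combination this
      rw [this]; exact hh
    · intro hh
      rw [WH.conj_eq] at hh
      have := key _ hh
      have he : (⟨h.x, h.y, h.z + dot h.x g.y - dot g.x h.y⟩ : WH p n) = h := by
        ext <;> simp <;> linear_combination this
      rw [he] at hh; exact hh
end

section
/- Let H₁ and H₂ be subgroups of the Weyl–Heisenberg group G, each intersecting the center of G trivially. Then H₁ and H₂ are conjugate in G if and only if S_{H₁} = S_{H₂}. -/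
-- === my aux ===
namespace WH
variable {p n : ℕ}

theorem dot_neg (u v : Fin n → ZMod p) : dot (-u) v = - dot u v := by
  simp [dot, Finset.sum_neg_distrib]

theorem conj_def (g h : WH p n) :
    g⁻¹ * h * g = ⟨h.x, h.y, h.z + dot g.x h.y - dot h.x g.y⟩ := by
  obtain ⟨a, b, c⟩ := g; obtain ⟨x, y, z⟩ := h
  ext i
  · simp [inv_def, mul_def]
  · simp [inv_def, mul_def]
  · show _ = _
    simp only [inv_def, mul_def]
    simp only [dot, Pi.neg_apply, Pi.add_apply, mul_add, add_mul, neg_mul, mul_neg,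
      Finset.sum_add_distrib, Finset.sum_neg_distrib]
    ring

theorem mem_center (c : ZMod p) : (⟨0, 0, c⟩ : WH p n) ∈ Subgroup.center (WH p n) := by
  rw [Subgroup.mem_center_iff]
  intro g
  ext i <;> simp [mul_def, dot, add_comm]

theorem z_unique {H : Subgroup (WH p n)} (hZ : H ⊓ Subgroup.center (WH p n) = ⊥)
    {x y : Fin n → ZMod p} {z z' : ZMod p}
    (h1 : (⟨x, y, z⟩ : WH p n) ∈ H) (h2 : (⟨x, y, z'⟩ : WH p n) ∈ H) : z = z' := by
  have hm : (⟨x, y, z⟩ : WH p n) * (⟨x, y, z'⟩ : WH p n)⁻¹ ∈ H := mul_mem h1 (inv_mem h2)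
  have he : (⟨x, y, z⟩ : WH p n) * (⟨x, y, z'⟩ : WH p n)⁻¹ = ⟨0, 0, z - z'⟩ := by
    ext i
    · simp [inv_def, mul_def]
    · simp [inv_def, mul_def]
    · show _ = _
      simp only [inv_def, mul_def, dot_neg]
      ring
  rw [he] at hm
  have : (⟨0, 0, z - z'⟩ : WH p n) ∈ H ⊓ Subgroup.center (WH p n) :=
    ⟨hm, mem_center _⟩
  rw [hZ, Subgroup.mem_bot, one_def] at this
  have := congrArg WH.z this
  simp at this
  linear_combination this

end WH

-- === S_H machinery ===
namespace WHaux
variable {p n : ℕ}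

open WH

/-- `S_H` as an additive subgroup. -/
def SHsub (H : Subgroup (WH p n)) : AddSubgroup ((Fin n → ZMod p) × (Fin n → ZMod p)) where
  carrier := SH H
  zero_mem' := ⟨0, by simpa [WH.one_def] using H.one_mem⟩
  add_mem' := by
    rintro a b ⟨za, ha⟩ ⟨zb, hb⟩
    refine ⟨za + zb + dot b.1 a.2, ?_⟩
    have := mul_mem ha hb
    rw [WH.mul_def] at this
    exact this
  neg_mem' := by
    rintro a ⟨za, ha⟩
    refine ⟨dot a.1 a.2 - za, ?_⟩
    have := inv_mem ha
    rw [WH.inv_def] at this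
    exact this

noncomputable def zpick (H : Subgroup (WH p n)) (v : (Fin n → ZMod p) × (Fin n → ZMod p))
    (hv : v ∈ SH H) : ZMod p := hv.choose

theorem zpick_mem (H : Subgroup (WH p n)) (v : (Fin n → ZMod p) × (Fin n → ZMod p))
    (hv : v ∈ SH H) : (⟨v.1, v.2, zpick H v hv⟩ : WH p n) ∈ H := hv.choose_spec

theorem zpick_eq {H : Subgroup (WH p n)} (hZ : H ⊓ Subgroup.center (WH p n) = ⊥)
    (v : (Fin n → ZMod p) × (Fin n → ZMod p)) (hv : v ∈ SH H) {z : ZMod p}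
    (hz : (⟨v.1, v.2, z⟩ : WH p n) ∈ H) : zpick H v hv = z :=
  WH.z_unique hZ (zpick_mem H v hv) hz

theorem zpick_add {H : Subgroup (WH p n)} (hZ : H ⊓ Subgroup.center (WH p n) = ⊥)
    (v w : (Fin n → ZMod p) × (Fin n → ZMod p)) (hv : v ∈ SH H) (hw : w ∈ SH H)
    (hvw : v + w ∈ SH H) :
    zpick H (v + w) hvw = zpick H v hv + zpick H w hw + dot w.1 v.2 := by
  apply zpick_eq hZ
  have := mul_mem (zpick_mem H v hv) (zpick_mem H w hw)
  rw [WH.mul_def] at this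
  exact this

end WHaux

namespace WHaux
variable {p n : ℕ}

/-- Representation of a linear functional on the symplectic space. -/
theorem phi_repr (φ : ((Fin n → ZMod p) × (Fin n → ZMod p)) →ₗ[ZMod p] ZMod p)
    (v : (Fin n → ZMod p) × (Fin n → ZMod p)) :
    φ v = dot (fun i => φ (0, fun j => if i = j then 1 else 0)) v.2
        - dot (fun i => - φ (fun j => if i = j then 1 else 0, 0)) v.1 := by
  have hv : v = (v.1, 0) + (0, v.2) := by simp
  conv_lhs => rw [hv, map_add]
  have h1 : φ (v.1, 0) = (φ.comp (LinearMap.inl (ZMod p) _ _)) v.1 := rfl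
  have h2 : φ (0, v.2) = (φ.comp (LinearMap.inr (ZMod p) _ _)) v.2 := rfl
  rw [h1, h2, LinearMap.pi_apply_eq_sum_univ, LinearMap.pi_apply_eq_sum_univ]
  simp only [LinearMap.comp_apply, LinearMap.inl_apply, LinearMap.inr_apply, dot,
    smul_eq_mul, mul_neg, Finset.sum_neg_distrib, mul_comm]
  ring

variable [Fact p.Prime]

/-- The difference-of-`z` function on `S_{H₁}` as a submodule element. -/
noncomputable def delta (H₁ H₂ : Subgroup (WH p n)) (hS : SH H₁ = SH H₂)
    (v : (AddSubgroup.toZModSubmodule p (SHsub H₁) :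
      Submodule (ZMod p) ((Fin n → ZMod p) × (Fin n → ZMod p)))) : ZMod p :=
  zpick H₂ v.1 (hS ▸ (show v.1 ∈ SH H₁ from v.2)) - zpick H₁ v.1 (show v.1 ∈ SH H₁ from v.2)

theorem delta_add (H₁ H₂ : Subgroup (WH p n))
    (hZ₁ : H₁ ⊓ Subgroup.center (WH p n) = ⊥) (hZ₂ : H₂ ⊓ Subgroup.center (WH p n) = ⊥)
    (hS : SH H₁ = SH H₂) (v w) :
    delta H₁ H₂ hS (v + w) = delta H₁ H₂ hS v + delta H₁ H₂ hS w := by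
  have hv : (v : (Fin n → ZMod p) × (Fin n → ZMod p)) ∈ SH H₁ := v.2
  have hw : (w : (Fin n → ZMod p) × (Fin n → ZMod p)) ∈ SH H₁ := w.2
  have hvw : (v : (Fin n → ZMod p) × (Fin n → ZMod p)) + w ∈ SH H₁ := (SHsub H₁).add_mem hv hw
  have hv' : (v : (Fin n → ZMod p) × (Fin n → ZMod p)) ∈ SH H₂ := hS ▸ hv
  have hw' : (w : (Fin n → ZMod p) × (Fin n → ZMod p)) ∈ SH H₂ := hS ▸ hw
  have hvw' : (v : (Fin n → ZMod p) × (Fin n → ZMod p)) + w ∈ SH H₂ := hS ▸ hvw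
  have e : delta H₁ H₂ hS (v + w) =
      zpick H₂ ((v : (Fin n → ZMod p) × (Fin n → ZMod p)) + w) hvw'
        - zpick H₁ ((v : (Fin n → ZMod p) × (Fin n → ZMod p)) + w) hvw := rfl
  rw [e, zpick_add hZ₁ _ _ hv hw hvw, zpick_add hZ₂ _ _ hv' hw' hvw']
  show _ = (zpick H₂ _ hv' - zpick H₁ _ hv) + (zpick H₂ _ hw' - zpick H₁ _ hw)
  ring

end WHaux


/-- Two subgroups `H₁, H₂` of the Weyl–Heisenberg group, each intersecting the center
trivially, are conjugate if and only if `S_{H₁} = S_{H₂}`. -/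
theorem conjugate_iff_SH_eq (p n : ℕ) [Fact p.Prime] (hn : 1 ≤ n)
    (H₁ H₂ : Subgroup (WH p n))
    (hZ₁ : H₁ ⊓ Subgroup.center (WH p n) = ⊥)
    (hZ₂ : H₂ ⊓ Subgroup.center (WH p n) = ⊥) :
    (∃ g : WH p n,
        (H₂ : Set (WH p n)) = (fun h => g⁻¹ * h * g) '' (H₁ : Set (WH p n))) ↔
      SH H₁ = SH H₂ := by
  constructor
  · rintro ⟨g, hg⟩
    ext v
    constructor
    · rintro ⟨z, hz⟩
      refine ⟨z + dot g.x v.2 - dot v.1 g.y, ?_⟩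
      have hmem : g⁻¹ * (⟨v.1, v.2, z⟩ : WH p n) * g ∈ (H₂ : Set (WH p n)) := by
        rw [hg]; exact ⟨_, hz, rfl⟩
      rw [WH.conj_def] at hmem
      exact hmem
    · rintro ⟨z, hz⟩
      have hmem : (⟨v.1, v.2, z⟩ : WH p n) ∈ (H₂ : Set (WH p n)) := hz
      rw [hg] at hmem
      obtain ⟨h, hh, hcon'⟩ := hmem
      have hcon : g⁻¹ * h * g = (⟨v.1, v.2, z⟩ : WH p n) := hcon'
      rw [WH.conj_def] at hcon
      have hx := congrArg WH.x hcon
      have hy := congrArg WH.y hcon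
      simp only at hx hy
      refine ⟨h.z, ?_⟩
      rw [← hx, ← hy]
      exact hh
  · intro hS
    classical
    set Sm : Submodule (ZMod p) ((Fin n → ZMod p) × (Fin n → ZMod p)) :=
      AddSubgroup.toZModSubmodule p (WHaux.SHsub H₁) with hSmdef
    let δlin : Sm →ₗ[ZMod p] ZMod p :=
      (AddMonoidHom.mk' (WHaux.delta H₁ H₂ hS)
        (WHaux.delta_add H₁ H₂ hZ₁ hZ₂ hS)).toZModLinearMap p
    obtain ⟨q, hq⟩ := Submodule.exists_isCompl Sm
    let φ : ((Fin n → ZMod p) × (Fin n → ZMod p)) →ₗ[ZMod p] ZMod p :=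
      δlin ∘ₗ (Sm.linearProjOfIsCompl q hq)
    have hφ : ∀ (v) (hv : v ∈ Sm), φ v = δlin ⟨v, hv⟩ := fun v hv =>
      congrArg δlin (Submodule.linearProjOfIsCompl_apply_left hq ⟨v, hv⟩)
    set a : Fin n → ZMod p := fun i => φ (0, fun j => if i = j then 1 else 0) with ha
    set b : Fin n → ZMod p := fun i => - φ (fun j => if i = j then 1 else 0, 0) with hb
    have key : ∀ (v : (Fin n → ZMod p) × (Fin n → ZMod p)) (hv1 : v ∈ SH H₁)
        (hv2 : v ∈ SH H₂),
        dot a v.2 - dot v.1 b = WHaux.zpick H₂ v hv2 - WHaux.zpick H₁ v hv1 := by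
      intro v hv1 hv2
      have hvS : v ∈ Sm := hv1
      rw [WH.dot_comm v.1 b]
      rw [← WHaux.phi_repr φ v, hφ v hvS]
      show WHaux.delta H₁ H₂ hS ⟨v, hvS⟩ = _
      show WHaux.zpick H₂ v _ - WHaux.zpick H₁ v _ = _
      rfl
    refine ⟨⟨a, b, 0⟩, ?_⟩
    ext h
    simp only [Set.mem_image, SetLike.mem_coe]
    constructor
    · intro hh
      obtain ⟨x, y, z⟩ := h
      have hv2 : ((x, y) : (Fin n → ZMod p) × (Fin n → ZMod p)) ∈ SH H₂ := ⟨z, hh⟩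
      have hv1 : ((x, y) : (Fin n → ZMod p) × (Fin n → ZMod p)) ∈ SH H₁ := by
        rw [hS]; exact hv2
      refine ⟨⟨x, y, WHaux.zpick H₁ (x, y) hv1⟩, WHaux.zpick_mem H₁ _ hv1, ?_⟩
      show _ * _ * _ = _
      rw [WH.conj_def]
      have hk := key (x, y) hv1 hv2
      have hz2 : WHaux.zpick H₂ (x, y) hv2 = z := WHaux.zpick_eq hZ₂ _ hv2 hh
      ext i
      · rfl
      · rfl
      · show WHaux.zpick H₁ (x, y) hv1 + dot a y - dot x b = z
        rw [← hz2]
        linear_combination hk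
    · rintro ⟨h', hh', heq⟩
      rw [← heq]
      show _ * _ * _ ∈ H₂
      rw [WH.conj_def]
      obtain ⟨x', y', z'⟩ := h'
      have hv1 : ((x', y') : (Fin n → ZMod p) × (Fin n → ZMod p)) ∈ SH H₁ := ⟨z', hh'⟩
      have hv2 : ((x', y') : (Fin n → ZMod p) × (Fin n → ZMod p)) ∈ SH H₂ := by
        rw [← hS]; exact hv1
      have hk := key (x', y') hv1 hv2
      have hz1 : WHaux.zpick H₁ (x', y') hv1 = z' := WHaux.zpick_eq hZ₁ _ hv1 hh'
      have hgoal : z' + dot a y' - dot x' b = WHaux.zpick H₂ (x', y') hv2 := by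
        rw [← hz1]; linear_combination hk
      show (⟨x', y', z' + dot a y' - dot x' b⟩ : WH p n) ∈ H₂
      rw [hgoal]
      exact WHaux.zpick_mem H₂ _ hv2
end

section
/- Every non-abelian subgroup of the Weyl–Heisenberg group G is normal in G. -/
section Aux

variable {p n : ℕ}

theorem WH.inv_def_s9 (g : WH p n) :
    g⁻¹ = ⟨-g.x, -g.y, dot g.x g.y - g.z⟩ := rfl

theorem dot_add_left (u v w : Fin n → ZMod p) : dot (u + v) w = dot u w + dot v w := by
  simp [dot, add_mul, Finset.sum_add_distrib]

theorem dot_add_right (u v w : Fin n → ZMod p) : dot u (v + w) = dot u v + dot u w := by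
  simp [dot, mul_add, Finset.sum_add_distrib]

theorem dot_neg_left (u v : Fin n → ZMod p) : dot (-u) v = - dot u v := by
  simp [dot, Finset.sum_neg_distrib]

theorem dot_neg_right (u v : Fin n → ZMod p) : dot u (-v) = - dot u v := by
  simp [dot, Finset.sum_neg_distrib]

theorem dot_zero_left (v : Fin n → ZMod p) : dot 0 v = 0 := by simp [dot]

theorem dot_zero_right (v : Fin n → ZMod p) : dot v 0 = 0 := by simp [dot]

theorem comm_eq (a b : WH p n) :
    a * b * a⁻¹ * b⁻¹ = ⟨0, 0, dot b.x a.y - dot a.x b.y⟩ := by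
  obtain ⟨x, y, z⟩ := a; obtain ⟨x', y', z'⟩ := b
  simp only [WH.mul_def, WH.inv_def_s9, dot_add_left, dot_add_right, dot_neg_left, dot_neg_right]
  ext <;> simp <;> ring

theorem central_pow (c : ZMod p) (m : ℕ) :
    (⟨0, 0, c⟩ : WH p n) ^ m = ⟨0, 0, (m : ZMod p) * c⟩ := by
  induction m with
  | zero => simp [WH.one_def]
  | succ k ih =>
    rw [pow_succ, ih, WH.mul_def]
    ext <;> simp [dot_zero_left] <;> push_cast <;> ring

end Aux

/-- Every non-abelian subgroup of the Weyl–Heisenberg group is normal. -/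
theorem nonabelian_subgroup_normal (p n : ℕ) [Fact p.Prime] (hn : 1 ≤ n)
    (H : Subgroup (WH p n)) (h : ¬ ∀ a ∈ H, ∀ b ∈ H, a * b = b * a) :
    H.Normal := by
  push_neg at h
  obtain ⟨a, ha, b, hb, hab⟩ := h
  -- the commutator is a nontrivial central element of H
  have hcommH : a * b * a⁻¹ * b⁻¹ ∈ H := by
    exact mul_mem (mul_mem (mul_mem ha hb) (inv_mem ha)) (inv_mem hb)
  rw [comm_eq] at hcommH
  set c : ZMod p := dot b.x a.y - dot a.x b.y with hc
  have hc0 : c ≠ 0 := by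
    intro h0
    apply hab
    have h1 : a * b * a⁻¹ * b⁻¹ = 1 := by
      rw [comm_eq, ← hc, h0, WH.one_def]
    calc a * b = (a * b * a⁻¹ * b⁻¹) * (b * a) := by group
      _ = b * a := by rw [h1, one_mul]
  -- the whole center is in H
  have hcenter : ∀ t : ZMod p, (⟨0, 0, t⟩ : WH p n) ∈ H := by
    intro t
    have := pow_mem hcommH (t * c⁻¹).val
    rw [central_pow] at this
    rwa [ZMod.natCast_val, ZMod.cast_id, mul_assoc, inv_mul_cancel₀ hc0, mul_one] at this
  constructor
  intro g hg k
  have key : k * g * k⁻¹ = (⟨0, 0, dot g.x k.y - dot k.x g.y⟩ : WH p n) * g := by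
    rw [← comm_eq k g]
    group
  rw [key]
  exact mul_mem (hcenter _) hg
end

section
/- Let p = 2. If H is a subgroup of the Weyl–Heisenberg group G that does not contain the center of G, then x·y = 0 in ℤ/2ℤ for every (x,y,z) ∈ H. -/
/-- For `p = 2`: if a subgroup `H` of the Weyl–Heisenberg group does not contain the
center, then `x·y = 0` for every `(x,y,z) ∈ H`. -/
theorem p_two_dot_eq_zero (n : ℕ) (hn : 1 ≤ n)
    (H : Subgroup (WH 2 n)) (hZ : ¬ Subgroup.center (WH 2 n) ≤ H) :
    ∀ g ∈ H, dot g.x g.y = 0 := by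
  intro g hg
  by_contra hne
  have h1 : dot g.x g.y = 1 := by
    have : ∀ a : ZMod 2, a ≠ 0 → a = 1 := by decide
    exact this _ hne
  -- g * g = (0, 0, dot g.x g.y)
  have hsq : g * g = (⟨0, 0, 1⟩ : WH 2 n) := by
    rw [WH.mul_def]
    ext <;> simp [CharTwo.add_self_eq_zero, h1]
  have hmem : (⟨0, 0, 1⟩ : WH 2 n) ∈ H := hsq ▸ H.mul_mem hg hg
  apply hZ
  intro c hc
  rw [Subgroup.mem_center_iff] at hc
  have hcomm : ∀ k : WH 2 n, dot c.x k.y = dot k.x c.y := by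
    intro k
    have := hc k
    rw [WH.mul_def, WH.mul_def] at this
    have hz := congrArg WH.z this
    simp only at hz
    linear_combination hz
  have hdot : ∀ (i : Fin n) (v : Fin n → ZMod 2),
      dot (Pi.single i 1) v = v i := by
    intro i v
    simp [dot, Pi.single_apply, ite_mul, Finset.sum_ite_eq]
  have hx : c.x = 0 := by
    funext i
    have := hcomm ⟨0, Pi.single i 1, 0⟩
    simpa [dot, Pi.single_apply, mul_ite, ite_mul, Finset.sum_ite_eq, Finset.sum_ite_eq'] using this
  have hy : c.y = 0 := by
    funext i
    have := hcomm ⟨Pi.single i 1, 0, 0⟩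
    simpa [dot, Pi.single_apply, mul_ite, ite_mul, Finset.sum_ite_eq, Finset.sum_ite_eq'] using this.symm
  have hz2 : c.z = 0 ∨ c.z = 1 := by
    have : ∀ a : ZMod 2, a = 0 ∨ a = 1 := by decide
    exact this _
  rcases hz2 with h | h
  · have : c = (1 : WH 2 n) := by
      rw [WH.one_def]; ext <;> simp [hx, hy, h]
    rw [this]; exact H.one_mem
  · have : c = (⟨0, 0, 1⟩ : WH 2 n) := by
      ext <;> simp [hx, hy, h]
    rw [this]; exact hmem
end

section
/- Let α be a nonzero element of ℤ/pℤ and k ∈ ℤ/pℤ, and let U_α be the permutation matrix on ℂ^(p^n) defined by U_α|u⟩ = |αu⟩. Then for every g ∈ G, U_α ρ_k(g) U_α† = ρ_{kα⁻²}(φ_α(g)), where φ_α(x,y,z) = (αx, αy, α²z) (the irreducible representation label changes from k to kα⁻²). -/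
open Matrix Kronecker

/-- The primitive `p`-th root of unity `ω_p = e^(2πi/p)`. -/
noncomputable def omega (p : ℕ) : ℂ := Complex.exp (2 * Real.pi * Complex.I / p)

/-- The `pⁿ`-dimensional representation
`ρ_k(x,y,z) = Σ_u ω_p^(k(z+y·u)) |u+x⟩⟨u|` of the Weyl–Heisenberg group,
written as a matrix indexed by the standard basis `{|u⟩ : u ∈ (ℤ/pℤ)ⁿ}`. -/
noncomputable def rho (p n : ℕ) (k : ZMod p) (g : WH p n) :
    Matrix (Fin n → ZMod p) (Fin n → ZMod p) ℂ :=
  fun a b => if a = b + g.x then omega p ^ (k * (g.z + dot g.y b)).val else 0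
/-- The permutation matrix `U_α|u⟩ = |αu⟩`. -/
def Ualpha (p n : ℕ) (α : ZMod p) : Matrix (Fin n → ZMod p) (Fin n → ZMod p) ℂ :=
  fun a b => if a = α • b then 1 else 0

lemma Ualpha_conj {p n : ℕ} [Fact p.Prime] (α : ZMod p) (hα : α ≠ 0)
    (M : Matrix (Fin n → ZMod p) (Fin n → ZMod p) ℂ) (a b : Fin n → ZMod p) :
    (Ualpha p n α * M * (Ualpha p n α)ᴴ) a b = M (α⁻¹ • a) (α⁻¹ • b) := by
  have hiff : ∀ (u v : Fin n → ZMod p), u = α • v ↔ v = α⁻¹ • u := by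
    intro u v
    constructor
    · rintro rfl; rw [smul_smul, inv_mul_cancel₀ hα, one_smul]
    · rintro rfl; rw [smul_smul, mul_inv_cancel₀ hα, one_smul]
  simp only [Matrix.mul_apply, Matrix.conjTranspose_apply, Ualpha, hiff,
    ite_mul, mul_ite, one_mul, mul_one, zero_mul, mul_zero, apply_ite (star : ℂ → ℂ), star_one, star_zero,
    Finset.sum_ite_eq, Finset.sum_ite_eq', Finset.mem_univ, if_true]

/-- Changing the label of an irreducible representation:
`U_α ρ_k(g) U_α† = ρ_{kα⁻²}(φ_α(g))` where `φ_α(x,y,z) = (αx, αy, α²z)`. -/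
theorem change_of_label (p n : ℕ) [Fact p.Prime] (hn : 1 ≤ n)
    (α : ZMod p) (hα : α ≠ 0) (k : ZMod p) (g : WH p n) :
    Ualpha p n α * rho p n k g * (Ualpha p n α)ᴴ =
      rho p n (k * (α ^ 2)⁻¹) ⟨α • g.x, α • g.y, α ^ 2 * g.z⟩ := by
  ext a b
  rw [Ualpha_conj α hα]
  simp only [rho]
  have hcond : (α⁻¹ • a = α⁻¹ • b + g.x) ↔ (a = b + α • g.x) := by
    constructor
    · intro h
      have := congrArg (α • ·) h
      simpa [smul_add, smul_smul, mul_inv_cancel₀ hα] using this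
    · rintro rfl
      simp [smul_add, smul_smul, inv_mul_cancel₀ hα]
  have e1 : dot (α • g.y) b = α * dot g.y b := by
    simp [dot, Finset.mul_sum, mul_assoc]
  have e2 : dot g.y (α⁻¹ • b) = α⁻¹ * dot g.y b := by
    simp only [dot, Finset.mul_sum, Pi.smul_apply, smul_eq_mul]
    exact Finset.sum_congr rfl fun i _ => by ring
  have hexp : k * (g.z + dot g.y (α⁻¹ • b)) =
      k * (α ^ 2)⁻¹ * (α ^ 2 * g.z + dot (α • g.y) b) := by
    rw [e1, e2]
    field_simp
  simp only [hcond, hexp]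
end
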